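/- For every prime p ≥ 3 and every n with p | (n − 1), the zero-sum Ramsey number of the star K_{1,n−1} satisfies R(K_{1,n−1}, ℤ/pℤ) ≥ n + p − 1; i.e., there is a ℤ/pℤ-edge-coloring of K_{n+p−2} containing no zero-sum copy of the star with n − 1 edges. -/
import Mathlib


open Finset

/-- Lower bound for stars: for `p ≥ 3` prime and `p ∣ n − 1` (with `n ≥ 2`), there is a
`ZMod p`-edge-coloring of the complete graph on `n + p − 2` vertices with no zero-sum
copy of the star `K_{1,n−1}`; hence `R(K_{1,n−1}, ℤ_p) ≥ n + p − 1`. -/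
theorem star_zero_sum_lower_bound (p : ℕ) (hp : p.Prime) (hp3 : 3 ≤ p)
    (n : ℕ) (hn : 2 ≤ n) (hdiv : p ∣ n - 1) :
    ∃ χ : Fin (n + p - 2) → Fin (n + p - 2) → ZMod p,
      (∀ x y, χ x y = χ y x) ∧
      ∀ v : Fin (n + p - 2), ∀ S : Finset (Fin (n + p - 2)),
        v ∉ S → S.card = n - 1 → ∑ u ∈ S, χ v u ≠ 0 := by
  classical
  -- p is odd
  obtain ⟨k, hk⟩ := hp.odd_of_ne_two (by omega)
  -- n - 1 ≥ p
  have hnp : p ≤ n - 1 := Nat.le_of_dvd (by omega) hdiv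
  set N := n + p - 2 with hN
  have hNp : p ≤ N := by omega
  have hk1 : 1 ≤ k := by omega
  haveI : NeZero N := ⟨by omega⟩
  set f : Fin N → ZMod N := fun x => (x.val : ZMod N) with hf
  have hfval : ∀ x : Fin N, (f x).val = x.val := fun x =>
    ZMod.val_cast_of_lt x.isLt
  set Pd : ℕ → Prop := fun d => (1 ≤ d ∧ d ≤ k) ∨ N - k ≤ d with hPd
  have hPd0 : ¬ Pd 0 := by simp only [hPd]; omega
  refine ⟨fun x y => if Pd ((f x - f y).val) then 1 else 0, ?_, ?_⟩
  · -- symmetry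
    intro x y
    have : Pd ((f x - f y).val) ↔ Pd ((f y - f x).val) := by
      by_cases h : f x - f y = 0
      · have h' : f y - f x = 0 := by rw [← neg_sub, h, neg_zero]
        rw [h, h']
      · have hne : f y - f x = -(f x - f y) := by ring
        have hval : (f y - f x).val = N - (f x - f y).val := by
          rw [hne, ZMod.neg_val, if_neg h]
        have h1 : 1 ≤ (f x - f y).val := by
          have := (ZMod.val_eq_zero (f x - f y)).not.mpr h
          omega
        have h2 : (f x - f y).val < N := ZMod.val_lt _
        rw [hval]
        simp only [hPd]
        omega
    simp only [this]
  · intro v S hvS hScard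
    -- the sum equals the cardinality of the filtered set, cast to ZMod p
    rw [Finset.sum_boole]
    set T := S.filter (fun u => Pd ((f v - f u).val)) with hT
    set Nv := (univ : Finset (Fin N)).filter (fun u => Pd ((f v - f u).val)) with hNv
    -- count the neighborhood : |Nv| = 2k = p - 1
    have hNvcard : Nv.card = 2 * k := by
      have hcb : Nv.card = ((range N).filter Pd).card := by
        apply Finset.card_bij (fun u _ => (f v - f u).val)
        · intro u hu
          simp only [hNv, mem_filter, mem_univ, true_and] at hu
          simp only [mem_filter, mem_range]
          exact ⟨ZMod.val_lt _, hu⟩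
        · intro a ha b hb hab
          have : f v - f a = f v - f b := ZMod.val_injective N hab
          have hfab : f a = f b := by linear_combination -this
          have := congrArg ZMod.val hfab
          rw [hfval, hfval] at this
          exact Fin.ext this
        · intro b hb
          simp only [mem_filter, mem_range] at hb
          refine ⟨⟨(f v - (b : ZMod N)).val, ZMod.val_lt _⟩, ?_, ?_⟩
          · simp only [hNv, mem_filter, mem_univ, true_and]
            have hfu : f ⟨(f v - (b : ZMod N)).val, ZMod.val_lt _⟩
                = f v - (b : ZMod N) := by
              simp only [hf]
              exact ZMod.natCast_rightInverse _
            rw [hfu]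
            have : f v - (f v - (b : ZMod N)) = (b : ZMod N) := by ring
            rw [this, ZMod.val_cast_of_lt hb.1]
            exact hb.2
          · have hfu : f ⟨(f v - (b : ZMod N)).val, ZMod.val_lt _⟩
                = f v - (b : ZMod N) := by
              simp only [hf]
              exact ZMod.natCast_rightInverse _
            rw [hfu]
            have : f v - (f v - (b : ZMod N)) = (b : ZMod N) := by ring
            rw [this, ZMod.val_cast_of_lt hb.1]
      rw [hcb]
      have hset : (range N).filter Pd = Ico 1 (k + 1) ∪ Ico (N - k) N := by
        ext i
        simp only [mem_filter, mem_range, mem_union, mem_Ico, hPd]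
        omega
      rw [hset, Finset.card_union_of_disjoint, Nat.card_Ico, Nat.card_Ico]
      · omega
      · rw [Finset.disjoint_left]
        intro a ha hb
        simp only [mem_Ico] at ha hb
        omega
    -- T ⊆ Nv
    have hTle : T.card ≤ 2 * k := by
      rw [← hNvcard]
      apply Finset.card_le_card
      intro u hu
      simp only [hT, mem_filter] at hu
      simp only [hNv, mem_filter, mem_univ, true_and]
      exact hu.2
    -- lower bound : Nv ⊆ T ∪ (univ \ insert v S)
    have hsub : Nv ⊆ T ∪ ((univ : Finset (Fin N)) \ insert v S) := by
      intro u hu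
      simp only [hNv, mem_filter, mem_univ, true_and] at hu
      by_cases hus : u ∈ S
      · exact Finset.mem_union_left _ (Finset.mem_filter.mpr ⟨hus, hu⟩)
      · apply Finset.mem_union_right
        simp only [Finset.mem_sdiff, mem_univ, true_and, Finset.mem_insert]
        rintro (rfl | h)
        · have : f u - f u = 0 := sub_self _
          rw [this, ZMod.val_zero] at hu
          exact hPd0 hu
        · exact hus h
    have hcompl : ((univ : Finset (Fin N)) \ insert v S).card = p - 2 := by
      rw [Finset.card_sdiff_of_subset (Finset.subset_univ _), Finset.card_insert_of_notMem hvS,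
        hScard, Finset.card_univ, Fintype.card_fin]
      omega
    have hTge : 1 ≤ T.card := by
      have h1 : Nv.card ≤ (T ∪ ((univ : Finset (Fin N)) \ insert v S)).card :=
        Finset.card_le_card hsub
      have h2 := Finset.card_union_le T ((univ : Finset (Fin N)) \ insert v S)
      omega
    -- conclude : T.card ∈ [1, p-1], so nonzero mod p
    intro habs
    rw [ZMod.natCast_eq_zero_iff] at habs
    have := Nat.le_of_dvd (by omega) habs
    omega
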